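/- Let X be a locally compact T0 space. Then every irreducible closed subset of X is a Rudin set; consequently, the irreducible closed sets, the closed well-filtered determined sets and the closed Rudin sets of X coincide. -/

import Mathlib

open Set

universe u

variable {α : Type u}

/-- The specialization order used in the paper: `x ≤ y` iff `x ∈ closure {y}`. -/
def specLE [TopologicalSpace α] (x y : α) : Prop := x ∈ closure ({y} : Set α)

/-- `↑x = {y | x ≤ y}` in the specialization order. -/
def upOf [TopologicalSpace α] (x : α) : Set α := {y | specLE x y}

/-- `↑F = {y | ∃ a ∈ F, a ≤ y}` in the specialization order. -/
def upSetOf [TopologicalSpace α] (F : Set α) : Set α := {y | ∃ a ∈ F, specLE a y}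

/-- `↓B = {x | ∃ b ∈ B, x ≤ b}` in the specialization order. -/
def downOf [TopologicalSpace α] (B : Set α) : Set α := {x | ∃ b ∈ B, specLE x b}

/-- A set directed with respect to the specialization order: nonempty, and any two
elements have an upper bound in it. -/
def SDirected [TopologicalSpace α] (D : Set α) : Prop :=
  D.Nonempty ∧ ∀ a ∈ D, ∀ b ∈ D, ∃ c ∈ D, specLE a c ∧ specLE b c

/-- `s` is a supremum (least upper bound) of `D` in the specialization order. -/
def SIsSup [TopologicalSpace α] (D : Set α) (s : α) : Prop :=
  (∀ d ∈ D, specLE d s) ∧ ∀ t : α, (∀ d ∈ D, specLE d t) → specLE s t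

/-- Upper set (= saturated set) in the specialization order. -/
def SUpper [TopologicalSpace α] (A : Set α) : Prop :=
  ∀ ⦃x y : α⦄, x ∈ A → specLE x y → y ∈ A

/-- Scott open set with respect to the specialization order. -/
def SScottOpen [TopologicalSpace α] (U : Set α) : Prop :=
  SUpper U ∧ ∀ D : Set α, SDirected D → ∀ s : α, SIsSup D s → s ∈ U → (D ∩ U).Nonempty

/-- A d-space: a dcpo under the specialization order, all open sets Scott open. -/
def IsDSpace (α : Type u) [TopologicalSpace α] : Prop :=
  (∀ D : Set α, SDirected D → ∃ s : α, SIsSup D s) ∧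
    ∀ U : Set α, IsOpen U → SScottOpen U

/-- Member of `K(X)`: nonempty, compact and saturated. -/
def IsKSet [TopologicalSpace α] (K : Set α) : Prop :=
  K.Nonempty ∧ IsCompact K ∧ SUpper K

/-- A filtered family of sets: nonempty, and any two members contain a common member. -/
def FilteredFam (𝒦 : Set (Set α)) : Prop :=
  𝒦.Nonempty ∧ ∀ K1 ∈ 𝒦, ∀ K2 ∈ 𝒦, ∃ K3 ∈ 𝒦, K3 ⊆ K1 ∩ K2

/-- Well-filtered space: for every filtered family of nonempty compact saturated sets whose
intersection is contained in an open `U`, some member is contained in `U`. -/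
def IsWellFiltered (α : Type u) [TopologicalSpace α] : Prop :=
  ∀ 𝒦 : Set (Set α), (∀ K ∈ 𝒦, IsKSet K) → FilteredFam 𝒦 →
    ∀ U : Set α, IsOpen U → ⋂₀ 𝒦 ⊆ U → ∃ K ∈ 𝒦, K ⊆ U

/-- Rudin set: a nonempty set `A` such that for some filtered family `𝒦 ⊆ K(X)`,
`closure A` is a minimal closed set meeting every member of `𝒦`. -/
def IsRudin [TopologicalSpace α] (A : Set α) : Prop :=
  A.Nonempty ∧ ∃ 𝒦 : Set (Set α), (∀ K ∈ 𝒦, IsKSet K) ∧ FilteredFam 𝒦 ∧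
    (∀ K ∈ 𝒦, (closure A ∩ K).Nonempty) ∧
    ∀ B : Set α, IsClosed B → B ⊆ closure A → (∀ K ∈ 𝒦, (B ∩ K).Nonempty) → B = closure A

/-- Well-filtered determined set: every continuous map into a well-filtered T0 space sends it
to a set whose closure is the closure of a unique point. -/
def IsWFD [TopologicalSpace α] (A : Set α) : Prop :=
  ∀ (Y : Type u) [TopologicalSpace Y] [T0Space Y], IsWellFiltered Y →
    ∀ f : α → Y, Continuous f → ∃! y : Y, closure (f '' A) = closure ({y} : Set Y)

/-- Irreducible set. -/
def IsIrred [TopologicalSpace α] (A : Set α) : Prop :=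
  A.Nonempty ∧ ∀ F1 F2 : Set α, IsClosed F1 → IsClosed F2 → A ⊆ F1 ∪ F2 → A ⊆ F1 ∨ A ⊆ F2

/-- Sober space: every irreducible closed set is the closure of a unique point. -/
def IsSober (α : Type u) [TopologicalSpace α] : Prop :=
  ∀ A : Set α, IsClosed A → IsIrred A → ∃! x : α, A = closure ({x} : Set α)

/-- `A` has a maximal element with respect to the specialization order. -/
def HasMaxElem [TopologicalSpace α] (A : Set α) : Prop :=
  ∃ m ∈ A, ∀ a ∈ A, specLE m a → a = m

/-- Strong d-space. -/
def IsStrongDSpace (α : Type u) [TopologicalSpace α] : Prop :=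
  ∀ D : Set α, SDirected D → ∀ x : α, ∀ U : Set α, IsOpen U →
    (⋂ d ∈ D, upOf d) ∩ upOf x ⊆ U → ∃ d ∈ D, upOf d ∩ upOf x ⊆ U

section Aux
variable {α : Type u}

lemma specLE_refl [TopologicalSpace α] (x : α) : specLE x x := subset_closure rfl

lemma specLE_trans [TopologicalSpace α] {x y z : α} (h1 : specLE x y) (h2 : specLE y z) :
    specLE x z := by
  have : closure ({y} : Set α) ⊆ closure {z} :=
    closure_minimal (by simpa [Set.singleton_subset_iff, specLE] using h2) isClosed_closure
  exact this h1

lemma mem_open_of_specLE [TopologicalSpace α] {U : Set α} (hU : IsOpen U) {x y : α}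
    (hx : x ∈ U) (h : specLE x y) : y ∈ U := by
  have := mem_closure_iff.mp h U hU hx
  simpa using this

lemma subset_upSetOf [TopologicalSpace α] (S : Set α) : S ⊆ upSetOf S :=
  fun x hx => ⟨x, hx, specLE_refl x⟩

lemma sUpper_upSetOf [TopologicalSpace α] (S : Set α) : SUpper (upSetOf S) := by
  rintro x y ⟨a, ha, hax⟩ hxy
  exact ⟨a, ha, specLE_trans hax hxy⟩

lemma upSetOf_subset_open [TopologicalSpace α] {S U : Set α} (hU : IsOpen U) (h : S ⊆ U) :
    upSetOf S ⊆ U := by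
  rintro y ⟨a, ha, hay⟩
  exact mem_open_of_specLE hU (h ha) hay

lemma upSetOf_mono [TopologicalSpace α] {S T : Set α} (h : S ⊆ T) : upSetOf S ⊆ upSetOf T := by
  rintro y ⟨a, ha, hay⟩; exact ⟨a, h ha, hay⟩

lemma isCompact_upSetOf [TopologicalSpace α] {S : Set α} (hS : IsCompact S) :
    IsCompact (upSetOf S) := by
  apply isCompact_of_finite_subcover
  intro ι U hU hcov
  obtain ⟨t, ht⟩ := hS.elim_finite_subcover U hU ((subset_upSetOf S).trans hcov)
  exact ⟨t, upSetOf_subset_open (isOpen_biUnion fun i _ => hU i) ht⟩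

lemma isKSet_upSetOf [TopologicalSpace α] {S : Set α} (hne : S.Nonempty) (hS : IsCompact S) :
    IsKSet (upSetOf S) :=
  ⟨hne.mono (subset_upSetOf S), isCompact_upSetOf hS, sUpper_upSetOf S⟩

/-- Part 1: irreducible closed sets are Rudin in locally compact spaces. -/
lemma irred_closed_isRudin [TopologicalSpace α] [LocallyCompactSpace α] {A : Set α}
    (hA : IsClosed A) (hirr : IsIrred A) : IsRudin A := by
  obtain ⟨hne, hstep⟩ := hirr
  -- open form of irreducibility
  have hopen : ∀ U1 U2 : Set α, IsOpen U1 → IsOpen U2 → (A ∩ U1).Nonempty →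
      (A ∩ U2).Nonempty → (A ∩ (U1 ∩ U2)).Nonempty := by
    intro U1 U2 h1 h2 hn1 hn2
    by_contra h
    have hsub : A ⊆ U1ᶜ ∪ U2ᶜ := by
      intro x hx
      by_contra hx'
      simp only [Set.mem_union, Set.mem_compl_iff, not_or, not_not] at hx'
      exact h ⟨x, hx, hx'.1, hx'.2⟩
    rcases hstep U1ᶜ U2ᶜ h1.isClosed_compl h2.isClosed_compl hsub with hc | hc
    · obtain ⟨x, hxA, hxU⟩ := hn1; exact hc hxA hxU
    · obtain ⟨x, hxA, hxU⟩ := hn2; exact hc hxA hxU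
  -- local compactness: compact saturated neighborhoods inside opens
  have hloc : ∀ x : α, ∀ U : Set α, IsOpen U → x ∈ U →
      ∃ K : Set α, IsKSet K ∧ x ∈ interior K ∧ K ⊆ U := by
    intro x U hU hx
    obtain ⟨s, hs, hsU, hsc⟩ := local_compact_nhds (hU.mem_nhds hx)
    refine ⟨upSetOf s, isKSet_upSetOf ⟨x, mem_of_mem_nhds hs⟩ hsc, ?_, upSetOf_subset_open hU hsU⟩
    exact interior_mono (subset_upSetOf s) (mem_interior_iff_mem_nhds.mpr hs)
  refine ⟨hne, {K | IsKSet K ∧ (A ∩ interior K).Nonempty}, fun K hK => hK.1, ?_, ?_, ?_⟩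
  · constructor
    · obtain ⟨x, hx⟩ := hne
      obtain ⟨K, hK, hxK, _⟩ := hloc x Set.univ isOpen_univ trivial
      exact ⟨K, hK, x, hx, hxK⟩
    · rintro K1 ⟨hK1, hn1⟩ K2 ⟨hK2, hn2⟩
      obtain ⟨x, hxA, hx1, hx2⟩ := hopen _ _ isOpen_interior isOpen_interior hn1 hn2
      obtain ⟨K3, hK3, hxK3, hK3sub⟩ :=
        hloc x (interior K1 ∩ interior K2) (isOpen_interior.inter isOpen_interior) ⟨hx1, hx2⟩
      exact ⟨K3, ⟨hK3, x, hxA, hxK3⟩,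
        hK3sub.trans (Set.inter_subset_inter interior_subset interior_subset)⟩
  · rintro K ⟨hK, x, hxA, hxK⟩
    rw [hA.closure_eq]
    exact ⟨x, hxA, interior_subset hxK⟩
  · intro B hB hBA hBmeet
    rw [hA.closure_eq] at hBA ⊢
    refine subset_antisymm hBA (fun a haA => ?_)
    by_contra haB
    obtain ⟨K, hK, haK, hKsub⟩ := hloc a Bᶜ hB.isOpen_compl haB
    obtain ⟨b, hbB, hbK⟩ := hBmeet K ⟨hK, a, haA, haK⟩
    exact hKsub hbK hbB

/-- Rudin sets that are closed are irreducible. -/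
lemma isRudin_isIrred [TopologicalSpace α] {A : Set α} (hA : IsClosed A) (h : IsRudin A) :
    IsIrred A := by
  obtain ⟨hne, 𝒦, hKs, hfil, hmeet, hmin⟩ := h
  rw [hA.closure_eq] at hmeet hmin
  refine ⟨hne, fun F1 F2 hF1 hF2 hsub => ?_⟩
  by_contra hcon
  push_neg at hcon
  have key : (∀ K ∈ 𝒦, ((A ∩ F1) ∩ K).Nonempty) ∨
      (∀ K ∈ 𝒦, ((A ∩ F2) ∩ K).Nonempty) := by
    by_contra hc
    push_neg at hc
    obtain ⟨⟨K1, hK1, h1⟩, ⟨K2, hK2, h2⟩⟩ := hc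
    obtain ⟨K3, hK3, hK3sub⟩ := hfil.2 K1 hK1 K2 hK2
    obtain ⟨x, hxA, hxK⟩ := hmeet K3 hK3
    rcases hsub hxA with hx | hx
    · exact Set.eq_empty_iff_forall_notMem.mp h1 x ⟨⟨hxA, hx⟩, (hK3sub hxK).1⟩
    · exact Set.eq_empty_iff_forall_notMem.mp h2 x ⟨⟨hxA, hx⟩, (hK3sub hxK).2⟩
  rcases key with hk | hk
  · have := hmin (A ∩ F1) (hA.inter hF1) Set.inter_subset_left hk
    exact hcon.1 (fun x hx => ((Set.ext_iff.mp this x).mpr hx).2)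
  · have := hmin (A ∩ F2) (hA.inter hF2) Set.inter_subset_left hk
    exact hcon.2 (fun x hx => ((Set.ext_iff.mp this x).mpr hx).2)

/-- Rudin sets are well-filtered determined. -/
lemma isRudin_isWFD [TopologicalSpace α] {A : Set α} (h : IsRudin A) : IsWFD A := by
  obtain ⟨hne, 𝒦, hKs, hfil, hmeet, hmin⟩ := h
  intro Y _ _ hwf f hf
  set ℱ : Set (Set Y) := (fun K => upSetOf (f '' (K ∩ closure A))) '' 𝒦 with hℱ
  have hKsetY : ∀ M ∈ ℱ, IsKSet M := by
    rintro M ⟨K, hK, rfl⟩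
    obtain ⟨x, hxA, hxK⟩ := hmeet K hK
    exact isKSet_upSetOf ⟨f x, x, ⟨hxK, hxA⟩, rfl⟩
      (((hKs K hK).2.1.inter_right isClosed_closure).image hf)
  have hfilY : FilteredFam ℱ := by
    constructor
    · exact hfil.1.image _
    · rintro M1 ⟨K1, hK1, rfl⟩ M2 ⟨K2, hK2, rfl⟩
      obtain ⟨K3, hK3, hK3sub⟩ := hfil.2 K1 hK1 K2 hK2
      refine ⟨_, ⟨K3, hK3, rfl⟩, Set.subset_inter ?_ ?_⟩ <;>
        exact upSetOf_mono (Set.image_mono (Set.inter_subset_inter_left _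
          (fun x hx => by first | exact (hK3sub hx).1 | exact (hK3sub hx).2)))
  -- find y in the intersection of ℱ and in closure (f '' A)
  have hy : ∃ y, y ∈ ⋂₀ ℱ ∧ y ∈ closure (f '' A) := by
    by_contra hc
    push_neg at hc
    have hsub : ⋂₀ ℱ ⊆ (closure (f '' A))ᶜ := fun y hy => hc y hy
    obtain ⟨M, hM, hMsub⟩ := hwf ℱ hKsetY hfilY _ isClosed_closure.isOpen_compl hsub
    obtain ⟨K, hK, rfl⟩ := hM
    obtain ⟨x, hxA, hxK⟩ := hmeet K hK
    have : f x ∈ closure (f '' A) :=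
      (image_closure_subset_closure_image hf) ⟨x, hxA, rfl⟩
    exact hMsub (subset_upSetOf _ ⟨x, ⟨hxK, hxA⟩, rfl⟩) this
  obtain ⟨y, hyInt, hyCl⟩ := hy
  have hmain : closure (f '' A) = closure ({y} : Set Y) := by
    apply subset_antisymm
    · -- closure A ⊆ f ⁻¹' closure {y}
      have hB : f ⁻¹' closure ({y} : Set Y) ∩ closure A = closure A := by
        apply hmin
        · exact (isClosed_closure.preimage hf).inter isClosed_closure
        · exact Set.inter_subset_right
        · intro K hK
          have hyM : y ∈ upSetOf (f '' (K ∩ closure A)) := hyInt _ ⟨K, hK, rfl⟩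
          obtain ⟨z, ⟨x, ⟨hxK, hxA⟩, rfl⟩, hzy⟩ := hyM
          exact ⟨x, ⟨hzy, hxA⟩, hxK⟩
      have : closure A ⊆ f ⁻¹' closure ({y} : Set Y) := by
        rw [← hB]; exact Set.inter_subset_left
      apply closure_minimal _ isClosed_closure
      rintro z ⟨x, hxA, rfl⟩
      exact this (subset_closure hxA)
    · exact closure_minimal (by simpa using hyCl) isClosed_closure
  refine ⟨y, hmain, fun y' hy' => ?_⟩
  have : closure ({y'} : Set Y) = closure ({y} : Set Y) := by rw [← hy', hmain]
  have h1 : y' ⤳ y := specializes_iff_mem_closure.mpr (this ▸ subset_closure rfl)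
  have h2 : y ⤳ y' := specializes_iff_mem_closure.mpr (this.symm ▸ subset_closure rfl)
  exact (h1.antisymm h2).eq

/-- Finite spaces are well-filtered. -/
lemma finite_isWellFiltered (Y : Type u) [TopologicalSpace Y] [Finite Y] : IsWellFiltered Y := by
  intro 𝒦 _ hfil U _ hsub
  obtain ⟨K0, hK0, hminK⟩ :=
    Set.Finite.exists_minimalFor id 𝒦 (Set.toFinite 𝒦) hfil.1
  have hK0min : ∀ K ∈ 𝒦, K0 ⊆ K := by
    intro K hK
    obtain ⟨K3, hK3, hK3sub⟩ := hfil.2 K0 hK0 K hK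
    have : K0 = K3 := Set.Subset.antisymm (hminK hK3 (hK3sub.trans Set.inter_subset_left)) (hK3sub.trans Set.inter_subset_left)
    exact this ▸ hK3sub.trans Set.inter_subset_right
  exact ⟨K0, hK0, (fun y hy => hsub (fun K hK => hK0min K hK hy))⟩

lemma t0_Prop : T0Space Prop := by
  refine ⟨fun p q h => ?_⟩
  have := (inseparable_iff_forall_isOpen.mp h) {True} isOpen_singleton_true
  simp only [Set.mem_singleton_iff, eq_iff_iff, iff_true] at this
  exact propext this

lemma isOpen_prop_id : IsOpen {p : Prop | p} := by
  have : {p : Prop | p} = {True} := by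
    ext p; simp [eq_iff_iff]
  rw [this]; exact isOpen_singleton_true

/-- Closed WFD sets are irreducible. -/
lemma isWFD_isIrred [TopologicalSpace α] {A : Set α} (hA : IsClosed A) (h : IsWFD A) :
    IsIrred A := by
  haveI : T0Space Prop := t0_Prop
  set Y := ULift.{u} Prop × ULift.{u} Prop
  have hwfY : IsWellFiltered Y := finite_isWellFiltered Y
  -- nonemptiness
  have hne : A.Nonempty := by
    obtain ⟨y, hy, _⟩ := h Y hwfY (fun _ => (⟨True⟩, ⟨True⟩)) continuous_const
    rcases Set.eq_empty_or_nonempty A with rfl | h'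
    · simp only [Set.image_empty, closure_empty] at hy
      exact absurd (hy ▸ subset_closure rfl : y ∈ (∅ : Set Y)) (Set.notMem_empty y)
    · exact h'
  refine ⟨hne, fun F1 F2 hF1 hF2 hsub => ?_⟩
  by_contra hcon
  push_neg at hcon
  obtain ⟨hns1, hns2⟩ := hcon
  obtain ⟨x1, hx1A, hx1F⟩ := Set.not_subset.mp hns1
  obtain ⟨x2, hx2A, hx2F⟩ := Set.not_subset.mp hns2
  set f : α → Y := fun x => (ULift.up (x ∈ F1ᶜ), ULift.up (x ∈ F2ᶜ)) with hfdef
  have hf : Continuous f := by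
    apply Continuous.prodMk
    · exact continuous_uliftUp.comp (continuous_Prop.mpr hF1.isOpen_compl)
    · exact continuous_uliftUp.comp (continuous_Prop.mpr hF2.isOpen_compl)
  obtain ⟨y, hy, _⟩ := h Y hwfY f hf
  have hV1 : IsOpen {z : Y | z.1.down} :=
    (isOpen_prop_id.preimage continuous_uliftDown).preimage continuous_fst
  have hV2 : IsOpen {z : Y | z.2.down} :=
    (isOpen_prop_id.preimage continuous_uliftDown).preimage continuous_snd
  have hmemcl : ∀ x ∈ A, f x ∈ closure ({y} : Set Y) := by
    intro x hx
    exact hy ▸ subset_closure ⟨x, hx, rfl⟩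
  have hy1 : y ∈ {z : Y | z.1.down} := by
    have := mem_closure_iff.mp (hmemcl x1 hx1A) _ hV1 hx1F
    obtain ⟨z, hz, hz'⟩ := this
    rwa [Set.mem_singleton_iff.mp hz'] at hz
  have hy2 : y ∈ {z : Y | z.2.down} := by
    have := mem_closure_iff.mp (hmemcl x2 hx2A) _ hV2 hx2F
    obtain ⟨z, hz, hz'⟩ := this
    rwa [Set.mem_singleton_iff.mp hz'] at hz
  have hyA : y ∈ closure (f '' A) := hy ▸ subset_closure rfl
  have := mem_closure_iff.mp hyA _ (hV1.inter hV2) ⟨hy1, hy2⟩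
  obtain ⟨z, ⟨hz1, hz2⟩, x, hxA, rfl⟩ := this
  rcases hsub hxA with hx | hx
  · exact hz1 hx
  · exact hz2 hx

end Aux

/-- in a locally compact T0 space, every irreducible closed set is a Rudin set,
and irreducible closed sets, closed well-filtered determined sets and closed Rudin sets
coincide. -/
theorem stmt_8 (α : Type u) [TopologicalSpace α] [T0Space α] [LocallyCompactSpace α] :
    (∀ A : Set α, IsClosed A → IsIrred A → IsRudin A) ∧
    {A : Set α | IsClosed A ∧ IsIrred A} = {A : Set α | IsClosed A ∧ IsWFD A} ∧
    {A : Set α | IsClosed A ∧ IsIrred A} = {A : Set α | IsClosed A ∧ IsRudin A} := by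
  have part1 : ∀ A : Set α, IsClosed A → IsIrred A → IsRudin A :=
    fun A hA hirr => irred_closed_isRudin hA hirr
  refine ⟨part1, ?_, ?_⟩
  · ext A
    simp only [Set.mem_setOf_eq]
    exact ⟨fun ⟨hc, hi⟩ => ⟨hc, isRudin_isWFD (part1 A hc hi)⟩,
      fun ⟨hc, hw⟩ => ⟨hc, isWFD_isIrred hc hw⟩⟩
  · ext A
    simp only [Set.mem_setOf_eq]
    exact ⟨fun ⟨hc, hi⟩ => ⟨hc, part1 A hc hi⟩,
      fun ⟨hc, hr⟩ => ⟨hc, isRudin_isIrred hc hr⟩⟩
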